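/- Let a, b be real numbers and set n = 2a − 1. Let φ : ℝ → ℝ be twice differentiable with φ(η) > 0 for all η, satisfying φφ'' − a(φ')² + bφ^(n+1) = 0 (real powers). Then the quantity E(η) = (φ'(η))²·φ(η)^(−2a) + 2b·log(φ(η)) is constant in η. -/

import Mathlib

/-- first integral of the soliton ODE in the degenerate case `n = 2a − 1`. -/
theorem stmt_5 (a b : ℝ) (n : ℝ) (hn : n = 2 * a - 1)
    (φ : ℝ → ℝ) (hφ : Differentiable ℝ φ) (hφ' : Differentiable ℝ (deriv φ))
    (hpos : ∀ η : ℝ, 0 < φ η)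
    (hode : ∀ η : ℝ,
      φ η * deriv (deriv φ) η - a * (deriv φ η) ^ 2 + b * (φ η) ^ (n + 1) = 0) :
    ∀ η₁ η₂ : ℝ,
      (deriv φ η₁) ^ 2 * (φ η₁) ^ (-(2 * a)) + 2 * b * Real.log (φ η₁)
        = (deriv φ η₂) ^ 2 * (φ η₂) ^ (-(2 * a)) + 2 * b * Real.log (φ η₂) := by
  set E : ℝ → ℝ := fun η =>
    (deriv φ η) ^ 2 * (φ η) ^ (-(2 * a)) + 2 * b * Real.log (φ η) with hE
  have key : ∀ x : ℝ, HasDerivAt E 0 x := by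
    intro x
    have hfx : (0:ℝ) < φ x := hpos x
    have hfx' : φ x ≠ 0 := ne_of_gt hfx
    have h1 : HasDerivAt φ (deriv φ x) x := (hφ x).hasDerivAt
    have h2 : HasDerivAt (deriv φ) (deriv (deriv φ) x) x := (hφ' x).hasDerivAt
    have hsq : HasDerivAt (fun η => (deriv φ η) ^ 2)
        ((2:ℕ) * (deriv φ x) ^ (2-1) * deriv (deriv φ) x) x := h2.pow 2
    have hrpow : HasDerivAt (fun η => (φ η) ^ (-(2 * a)))
        (deriv φ x * (-(2*a)) * (φ x) ^ (-(2*a) - 1)) x :=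
      h1.rpow_const (Or.inl hfx')
    have hlog : HasDerivAt (fun η => 2 * b * Real.log (φ η))
        (2 * b * (deriv φ x / φ x)) x := (h1.log hfx').const_mul (2*b)
    have hD : HasDerivAt E
        (((2:ℕ) * (deriv φ x) ^ (2-1) * deriv (deriv φ) x) * (φ x) ^ (-(2*a))
          + (deriv φ x) ^ 2 * (deriv φ x * (-(2*a)) * (φ x) ^ (-(2*a) - 1))
          + 2 * b * (deriv φ x / φ x)) x := (hsq.mul hrpow).add hlog
    have hodex := hode x
    rw [hn] at hodex
    have hnp : (2 * a - 1 + 1) = 2 * a := by ring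
    rw [hnp] at hodex
    have hf'' : deriv (deriv φ) x
        = (a * (deriv φ x) ^ 2 - b * (φ x) ^ (2*a)) / φ x := by
      field_simp
      rw [mul_comm a 2]
      linarith
    have e1 : (φ x) ^ (-(2*a)) = ((φ x) ^ (2*a))⁻¹ := Real.rpow_neg hfx.le _
    have e2 : (φ x) ^ (-(2*a) - 1) = ((φ x) ^ (2*a))⁻¹ * (φ x)⁻¹ := by
      rw [sub_eq_add_neg, Real.rpow_add hfx, e1, Real.rpow_neg_one]
    have hp : ((φ x) ^ (2*a)) ≠ 0 := ne_of_gt (Real.rpow_pos_of_pos hfx _)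
    have : (((2:ℕ) * (deriv φ x) ^ (2-1) * deriv (deriv φ) x) * (φ x) ^ (-(2*a))
          + (deriv φ x) ^ 2 * (deriv φ x * (-(2*a)) * (φ x) ^ (-(2*a) - 1))
          + 2 * b * (deriv φ x / φ x)) = 0 := by
      rw [hf'', e1, e2]
      field_simp
      ring
    rwa [this] at hD
  intro η₁ η₂
  exact is_const_of_deriv_eq_zero (fun x => (key x).differentiableAt)
    (fun x => (key x).deriv) η₁ η₂
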